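/- The inhomogeneous (anomalous) term of the σ⁰ transformation law satisfies the cocycle condition: with c_s := ð²f_s ∈ R[u] and D_s := D_s^{(3/2,−1/2)}, one has, for all symmetry parameters s₁, s₂, D_{s₁}c_{s₂} − D_{s₂}c_{s₁} = c_{[s₁,s₂]}. -/

import Mathlib

/-!
Common setup: we work over `ℂ` with flat conformal factor `φ̃ = 0`, so `P = √2` and the
eth operators reduce to `ð = √2 ∂_ζ̄` and `ð̄ = √2 ∂_ζ` on the ring `R[u]` of polynomials
in `u` with coefficients in `R = ℂ[ζ,ζ⁻¹,ζ̄,ζ̄⁻¹]`, which also carries `∂_u`.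

`R[u]` is modelled as `RU := AddMonoidAlgebra ℂ (ℤ × ℤ × ℕ)`, the monomial
`single (m,n,k) 1` representing `ζ^m ζ̄^n u^k`; `R` is `AddMonoidAlgebra ℂ (ℤ × ℤ)`, and
`ℂ[ζ,ζ⁻¹]`, `ℂ[ζ̄,ζ̄⁻¹]` are copies of `AddMonoidAlgebra ℂ ℤ`, all included into `RU`.
-/

/-- `R[u]`, with `single (m,n,k) 1 = ζ^m ζ̄^n u^k`. -/
abbrev RU : Type := AddMonoidAlgebra ℂ (ℤ × ℤ × ℕ)

/-- `R = ℂ[ζ,ζ⁻¹,ζ̄,ζ̄⁻¹]`. -/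
abbrev LR : Type := AddMonoidAlgebra ℂ (ℤ × ℤ)

/-- A copy of `ℂ[ζ,ζ⁻¹]` (resp. `ℂ[ζ̄,ζ̄⁻¹]`). -/
abbrev W : Type := AddMonoidAlgebra ℂ ℤ

/-- `ð = √2 ∂_ζ̄` on `R[u]`. -/
noncomputable def eth : RU →ₗ[ℂ] RU :=
  (AddMonoidAlgebra.coeffLinearEquiv ℂ).symm.toLinearMap ∘ₗ (Finsupp.lsum ℂ fun p : ℤ × ℤ × ℕ =>
    ((Real.sqrt 2 : ℂ) * p.2.1) • Finsupp.lsingle (p.1, p.2.1 - 1, p.2.2)) ∘ₗ (AddMonoidAlgebra.coeffLinearEquiv ℂ).toLinearMap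

/-- `ð̄ = √2 ∂_ζ` on `R[u]`. -/
noncomputable def ethBar : RU →ₗ[ℂ] RU :=
  (AddMonoidAlgebra.coeffLinearEquiv ℂ).symm.toLinearMap ∘ₗ (Finsupp.lsum ℂ fun p : ℤ × ℤ × ℕ =>
    ((Real.sqrt 2 : ℂ) * p.1) • Finsupp.lsingle (p.1 - 1, p.2.1, p.2.2)) ∘ₗ (AddMonoidAlgebra.coeffLinearEquiv ℂ).toLinearMap

/-- `∂_u` on `R[u]`. -/
noncomputable def du : RU →ₗ[ℂ] RU :=
  (AddMonoidAlgebra.coeffLinearEquiv ℂ).symm.toLinearMap ∘ₗ (Finsupp.lsum ℂ fun p : ℤ × ℤ × ℕ =>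
    (p.2.2 : ℂ) • Finsupp.lsingle (p.1, p.2.1, p.2.2 - 1)) ∘ₗ (AddMonoidAlgebra.coeffLinearEquiv ℂ).toLinearMap

/-- The element `u ∈ R[u]`. -/
noncomputable def uVar : RU := AddMonoidAlgebra.single ((0 : ℤ), (0 : ℤ), (1 : ℕ)) (1 : ℂ)

/-- The inclusion `ℂ[ζ̄,ζ̄⁻¹] ↪ R[u]`, `ζ̄^n ↦ ζ̄^n`. -/
noncomputable def incY : W →ₗ[ℂ] RU := (AddMonoidAlgebra.coeffLinearEquiv ℂ).symm.toLinearMap ∘ₗ (Finsupp.lsum ℂ fun n : ℤ => Finsupp.lsingle (0, n, 0)) ∘ₗ (AddMonoidAlgebra.coeffLinearEquiv ℂ).toLinearMap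

/-- The inclusion `ℂ[ζ,ζ⁻¹] ↪ R[u]`, `ζ^m ↦ ζ^m`. -/
noncomputable def incYb : W →ₗ[ℂ] RU := (AddMonoidAlgebra.coeffLinearEquiv ℂ).symm.toLinearMap ∘ₗ (Finsupp.lsum ℂ fun m : ℤ => Finsupp.lsingle (m, 0, 0)) ∘ₗ (AddMonoidAlgebra.coeffLinearEquiv ℂ).toLinearMap

/-- The inclusion `R ↪ R[u]`. -/
noncomputable def incT : LR →ₗ[ℂ] RU :=
  (AddMonoidAlgebra.coeffLinearEquiv ℂ).symm.toLinearMap ∘ₗ (Finsupp.lsum ℂ fun q : ℤ × ℤ => Finsupp.lsingle (q.1, q.2, 0)) ∘ₗ (AddMonoidAlgebra.coeffLinearEquiv ℂ).toLinearMap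

/-- `ð` on the copy `ℂ[ζ̄,ζ̄⁻¹]` (equivalently `ð̄` on the copy `ℂ[ζ,ζ⁻¹]`):
`√2` times the formal derivative. -/
noncomputable def ethW : W →ₗ[ℂ] W :=
  (AddMonoidAlgebra.coeffLinearEquiv ℂ).symm.toLinearMap ∘ₗ (Finsupp.lsum ℂ fun n : ℤ => ((Real.sqrt 2 : ℂ) * n) • Finsupp.lsingle (n - 1)) ∘ₗ (AddMonoidAlgebra.coeffLinearEquiv ℂ).toLinearMap

/-- `ð = √2 ∂_ζ̄` on `R`. -/
noncomputable def ethR : LR →ₗ[ℂ] LR :=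
  (AddMonoidAlgebra.coeffLinearEquiv ℂ).symm.toLinearMap ∘ₗ (Finsupp.lsum ℂ fun q : ℤ × ℤ => ((Real.sqrt 2 : ℂ) * q.2) • Finsupp.lsingle (q.1, q.2 - 1)) ∘ₗ (AddMonoidAlgebra.coeffLinearEquiv ℂ).toLinearMap

/-- `ð̄ = √2 ∂_ζ` on `R`. -/
noncomputable def ethBarR : LR →ₗ[ℂ] LR :=
  (AddMonoidAlgebra.coeffLinearEquiv ℂ).symm.toLinearMap ∘ₗ (Finsupp.lsum ℂ fun q : ℤ × ℤ => ((Real.sqrt 2 : ℂ) * q.1) • Finsupp.lsingle (q.1 - 1, q.2)) ∘ₗ (AddMonoidAlgebra.coeffLinearEquiv ℂ).toLinearMap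

/-- The inclusion `ℂ[ζ̄,ζ̄⁻¹] ↪ R`. -/
noncomputable def jY : W →ₗ[ℂ] LR := (AddMonoidAlgebra.coeffLinearEquiv ℂ).symm.toLinearMap ∘ₗ (Finsupp.lsum ℂ fun n : ℤ => Finsupp.lsingle (0, n)) ∘ₗ (AddMonoidAlgebra.coeffLinearEquiv ℂ).toLinearMap

/-- The inclusion `ℂ[ζ,ζ⁻¹] ↪ R`. -/
noncomputable def jYb : W →ₗ[ℂ] LR := (AddMonoidAlgebra.coeffLinearEquiv ℂ).symm.toLinearMap ∘ₗ (Finsupp.lsum ℂ fun m : ℤ => Finsupp.lsingle (m, 0)) ∘ₗ (AddMonoidAlgebra.coeffLinearEquiv ℂ).toLinearMap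

/-- A symmetry parameter `s = (𝒴, 𝒴̄, T)` with `𝒴 ∈ ℂ[ζ̄,ζ̄⁻¹]`, `𝒴̄ ∈ ℂ[ζ,ζ⁻¹]`
(so that `ð̄𝒴 = 0 = ð𝒴̄`, the conformal Killing equations) and `T ∈ R`. -/
structure SymParam : Type where
  /-- `𝒴`, a function of `ζ̄`. -/
  cY : W
  /-- `𝒴̄`, a function of `ζ`. -/
  cYb : W
  /-- The supertranslation part `T ∈ R`. -/
  T : LR

/-- `ψ_s = ð𝒴 + ð̄𝒴̄ ∈ R`. -/
noncomputable def psiR (s : SymParam) : LR := jY (ethW s.cY) + jYb (ethW s.cYb)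

/-- `f_s = T + (u/2) ψ_s ∈ R[u]`. -/
noncomputable def fOf (s : SymParam) : RU :=
  incT s.T + (1 / 2 : ℂ) • (uVar * incT (psiR s))

/-- The `𝔟𝔪𝔰₄` bracket `[s₁,s₂] = ŝ` on symmetry parameters:
`𝒴̂ = 𝒴₁ð𝒴₂ − 𝒴₂ð𝒴₁`, `𝒴̄̂ = 𝒴̄₁ð̄𝒴̄₂ − 𝒴̄₂ð̄𝒴̄₁`,
`T̂ = 𝒴₁ðT₂ + 𝒴̄₁ð̄T₂ − 𝒴₂ðT₁ − 𝒴̄₂ð̄T₁ − ½(ψ₁T₂ − ψ₂T₁)`. -/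
noncomputable def sBracket (s₁ s₂ : SymParam) : SymParam where
  cY := s₁.cY * ethW s₂.cY - s₂.cY * ethW s₁.cY
  cYb := s₁.cYb * ethW s₂.cYb - s₂.cYb * ethW s₁.cYb
  T := jY s₁.cY * ethR s₂.T + jYb s₁.cYb * ethBarR s₂.T
      - jY s₂.cY * ethR s₁.T - jYb s₂.cYb * ethBarR s₁.T
      - (1 / 2 : ℂ) • (psiR s₁ * s₂.T - psiR s₂ * s₁.T)

/-- The first-order differential operator
`D_s^{(k,k̄)} = f_s∂_u + 𝒴ð + 𝒴̄ð̄ + k(ð𝒴) + k̄(ð̄𝒴̄)` on `R[u]`, the last two terms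
acting by multiplication. -/
noncomputable def Dop (k kb : ℂ) (s : SymParam) : RU →ₗ[ℂ] RU :=
  (LinearMap.mulLeft ℂ (fOf s)).comp du
    + (LinearMap.mulLeft ℂ (incY s.cY)).comp eth
    + (LinearMap.mulLeft ℂ (incYb s.cYb)).comp ethBar
    + k • LinearMap.mulLeft ℂ (eth (incY s.cY))
    + kb • LinearMap.mulLeft ℂ (ethBar (incYb s.cYb))

/-- The inhomogeneous (anomalous) term `c_s = ð²f_s ∈ R[u]` of the `σ⁰` transformation
law. -/
noncomputable def cOf (s : SymParam) : RU := eth (eth (fOf s))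


section Helpers

open Finsupp AddMonoidAlgebra

lemma ofL_single {M N : Type} (F : (M →₀ ℂ) →ₗ[ℂ] (N →₀ ℂ)) (p : M) (c : ℂ) :
    ((AddMonoidAlgebra.coeffLinearEquiv ℂ).symm.toLinearMap ∘ₗ F ∘ₗ
      (AddMonoidAlgebra.coeffLinearEquiv ℂ).toLinearMap) (AddMonoidAlgebra.single p c)
      = AddMonoidAlgebra.ofCoeff (F (Finsupp.single p c)) := rfl

-- ## Single evaluation lemmas

lemma eth_single (p : ℤ × ℤ × ℕ) (c : ℂ) :
    eth (AddMonoidAlgebra.single p c)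
      = AddMonoidAlgebra.single (p.1, p.2.1 - 1, p.2.2) (((Real.sqrt 2 : ℂ) * p.2.1) * c) := by
  erw [eth, ofL_single, Finsupp.lsum_single, LinearMap.smul_apply, Finsupp.lsingle_apply,
    Finsupp.smul_single, smul_eq_mul, AddMonoidAlgebra.ofCoeff_single]

lemma ethBar_single (p : ℤ × ℤ × ℕ) (c : ℂ) :
    ethBar (AddMonoidAlgebra.single p c)
      = AddMonoidAlgebra.single (p.1 - 1, p.2.1, p.2.2) (((Real.sqrt 2 : ℂ) * p.1) * c) := by
  erw [ethBar, ofL_single, Finsupp.lsum_single, LinearMap.smul_apply, Finsupp.lsingle_apply,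
    Finsupp.smul_single, smul_eq_mul, AddMonoidAlgebra.ofCoeff_single]

lemma du_single (p : ℤ × ℤ × ℕ) (c : ℂ) :
    du (AddMonoidAlgebra.single p c)
      = AddMonoidAlgebra.single (p.1, p.2.1, p.2.2 - 1) ((p.2.2 : ℂ) * c) := by
  erw [du, ofL_single, Finsupp.lsum_single, LinearMap.smul_apply, Finsupp.lsingle_apply,
    Finsupp.smul_single, smul_eq_mul, AddMonoidAlgebra.ofCoeff_single]

lemma ethW_single (n : ℤ) (c : ℂ) :
    ethW (AddMonoidAlgebra.single n c)
      = AddMonoidAlgebra.single (n - 1) (((Real.sqrt 2 : ℂ) * n) * c) := by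
  erw [ethW, ofL_single, Finsupp.lsum_single, LinearMap.smul_apply, Finsupp.lsingle_apply,
    Finsupp.smul_single, smul_eq_mul, AddMonoidAlgebra.ofCoeff_single]

lemma ethR_single (q : ℤ × ℤ) (c : ℂ) :
    ethR (AddMonoidAlgebra.single q c)
      = AddMonoidAlgebra.single (q.1, q.2 - 1) (((Real.sqrt 2 : ℂ) * q.2) * c) := by
  erw [ethR, ofL_single, Finsupp.lsum_single, LinearMap.smul_apply, Finsupp.lsingle_apply,
    Finsupp.smul_single, smul_eq_mul, AddMonoidAlgebra.ofCoeff_single]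

lemma ethBarR_single (q : ℤ × ℤ) (c : ℂ) :
    ethBarR (AddMonoidAlgebra.single q c)
      = AddMonoidAlgebra.single (q.1 - 1, q.2) (((Real.sqrt 2 : ℂ) * q.1) * c) := by
  erw [ethBarR, ofL_single, Finsupp.lsum_single, LinearMap.smul_apply, Finsupp.lsingle_apply,
    Finsupp.smul_single, smul_eq_mul, AddMonoidAlgebra.ofCoeff_single]

lemma incY_single (n : ℤ) (c : ℂ) :
    incY (AddMonoidAlgebra.single n c) = AddMonoidAlgebra.single (0, n, 0) c := by
  erw [incY, ofL_single, Finsupp.lsum_single, Finsupp.lsingle_apply, AddMonoidAlgebra.ofCoeff_single]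

lemma incYb_single (m : ℤ) (c : ℂ) :
    incYb (AddMonoidAlgebra.single m c) = AddMonoidAlgebra.single (m, 0, 0) c := by
  erw [incYb, ofL_single, Finsupp.lsum_single, Finsupp.lsingle_apply, AddMonoidAlgebra.ofCoeff_single]

lemma incT_single (q : ℤ × ℤ) (c : ℂ) :
    incT (AddMonoidAlgebra.single q c) = AddMonoidAlgebra.single (q.1, q.2, 0) c := by
  erw [incT, ofL_single, Finsupp.lsum_single, Finsupp.lsingle_apply, AddMonoidAlgebra.ofCoeff_single]

lemma jY_single (n : ℤ) (c : ℂ) :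
    jY (AddMonoidAlgebra.single n c) = AddMonoidAlgebra.single (0, n) c := by
  erw [jY, ofL_single, Finsupp.lsum_single, Finsupp.lsingle_apply, AddMonoidAlgebra.ofCoeff_single]

lemma jYb_single (m : ℤ) (c : ℂ) :
    jYb (AddMonoidAlgebra.single m c) = AddMonoidAlgebra.single (m, 0) c := by
  erw [jYb, ofL_single, Finsupp.lsum_single, Finsupp.lsingle_apply, AddMonoidAlgebra.ofCoeff_single]

-- ## Leibniz rules

lemma eth_mul (x y : RU) : eth (x * y) = eth x * y + x * eth y := by
  induction x using AddMonoidAlgebra.induction_linear with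
  | zero => simp
  | add f g hf hg => simp only [add_mul, map_add, hf, hg]; ring
  | single a b =>
    induction y using AddMonoidAlgebra.induction_linear with
    | zero => simp
    | add f g hf hg => simp only [mul_add, map_add, hf, hg]; ring
    | single a' b' =>
      obtain ⟨m, n, k⟩ := a; obtain ⟨m', n', k'⟩ := a'
      rw [AddMonoidAlgebra.single_mul_single, eth_single, eth_single, eth_single,
        AddMonoidAlgebra.single_mul_single, AddMonoidAlgebra.single_mul_single]
      simp only [Prod.mk_add_mk]
      have h1 : n - 1 + n' = n + n' - 1 := by ring
      have h2 : n + (n' - 1) = n + n' - 1 := by ring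
      rw [h1, h2, ← AddMonoidAlgebra.single_add]
      congr 1
      push_cast
      ring

lemma ethBar_mul (x y : RU) : ethBar (x * y) = ethBar x * y + x * ethBar y := by
  induction x using AddMonoidAlgebra.induction_linear with
  | zero => simp
  | add f g hf hg => simp only [add_mul, map_add, hf, hg]; ring
  | single a b =>
    induction y using AddMonoidAlgebra.induction_linear with
    | zero => simp
    | add f g hf hg => simp only [mul_add, map_add, hf, hg]; ring
    | single a' b' =>
      obtain ⟨m, n, k⟩ := a; obtain ⟨m', n', k'⟩ := a'
      rw [AddMonoidAlgebra.single_mul_single, ethBar_single, ethBar_single, ethBar_single,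
        AddMonoidAlgebra.single_mul_single, AddMonoidAlgebra.single_mul_single]
      simp only [Prod.mk_add_mk]
      have h1 : m - 1 + m' = m + m' - 1 := by ring
      have h2 : m + (m' - 1) = m + m' - 1 := by ring
      rw [h1, h2, ← AddMonoidAlgebra.single_add]
      congr 1
      push_cast
      ring

lemma du_mul (x y : RU) : du (x * y) = du x * y + x * du y := by
  induction x using AddMonoidAlgebra.induction_linear with
  | zero => simp
  | add f g hf hg => simp only [add_mul, map_add, hf, hg]; ring
  | single a b =>
    induction y using AddMonoidAlgebra.induction_linear with
    | zero => simp
    | add f g hf hg => simp only [mul_add, map_add, hf, hg]; ring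
    | single a' b' =>
      obtain ⟨m, n, k⟩ := a; obtain ⟨m', n', k'⟩ := a'
      rw [AddMonoidAlgebra.single_mul_single, du_single, du_single, du_single,
        AddMonoidAlgebra.single_mul_single, AddMonoidAlgebra.single_mul_single]
      simp only [Prod.mk_add_mk]
      rcases k with _ | k <;> rcases k' with _ | k'
      · simp
      · simp only [Nat.cast_zero, zero_mul, AddMonoidAlgebra.single_zero, zero_add, Nat.zero_add]
        congr 1
        push_cast
        ring
      · simp only [Nat.cast_zero, zero_mul, mul_zero, AddMonoidAlgebra.single_zero, add_zero,
          Nat.add_zero]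
        congr 1
        push_cast
        ring
      · have h1 : k + 1 - 1 + (k' + 1) = k + 1 + (k' + 1) - 1 := by omega
        have h2 : k + 1 + (k' + 1 - 1) = k + 1 + (k' + 1) - 1 := by omega
        rw [h1, h2, ← AddMonoidAlgebra.single_add]
        congr 1
        push_cast
        ring

lemma ethW_mul (x y : W) : ethW (x * y) = ethW x * y + x * ethW y := by
  induction x using AddMonoidAlgebra.induction_linear with
  | zero => simp
  | add f g hf hg => simp only [add_mul, map_add, hf, hg]; ring
  | single a b =>
    induction y using AddMonoidAlgebra.induction_linear with
    | zero => simp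
    | add f g hf hg => simp only [mul_add, map_add, hf, hg]; ring
    | single a' b' =>
      rw [AddMonoidAlgebra.single_mul_single, ethW_single, ethW_single, ethW_single,
        AddMonoidAlgebra.single_mul_single, AddMonoidAlgebra.single_mul_single]
      have h1 : a - 1 + a' = a + a' - 1 := by ring
      have h2 : a + (a' - 1) = a + a' - 1 := by ring
      rw [h1, h2, ← AddMonoidAlgebra.single_add]
      congr 1
      push_cast
      ring

-- ## Multiplicativity of the inclusions

lemma incY_mul (x y : W) : incY (x * y) = incY x * incY y := by
  induction x using AddMonoidAlgebra.induction_linear with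
  | zero => simp
  | add f g hf hg => simp only [add_mul, map_add, hf, hg]
  | single a b =>
    induction y using AddMonoidAlgebra.induction_linear with
    | zero => simp
    | add f g hf hg => simp only [mul_add, map_add, hf, hg]
    | single a' b' =>
      rw [AddMonoidAlgebra.single_mul_single, incY_single, incY_single, incY_single,
        AddMonoidAlgebra.single_mul_single]
      rfl

lemma incYb_mul (x y : W) : incYb (x * y) = incYb x * incYb y := by
  induction x using AddMonoidAlgebra.induction_linear with
  | zero => simp
  | add f g hf hg => simp only [add_mul, map_add, hf, hg]
  | single a b =>
    induction y using AddMonoidAlgebra.induction_linear with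
    | zero => simp
    | add f g hf hg => simp only [mul_add, map_add, hf, hg]
    | single a' b' =>
      rw [AddMonoidAlgebra.single_mul_single, incYb_single, incYb_single, incYb_single,
        AddMonoidAlgebra.single_mul_single]
      rfl

lemma incT_mul (x y : LR) : incT (x * y) = incT x * incT y := by
  induction x using AddMonoidAlgebra.induction_linear with
  | zero => simp
  | add f g hf hg => simp only [add_mul, map_add, hf, hg]
  | single a b =>
    induction y using AddMonoidAlgebra.induction_linear with
    | zero => simp
    | add f g hf hg => simp only [mul_add, map_add, hf, hg]
    | single a' b' =>
      rw [AddMonoidAlgebra.single_mul_single, incT_single, incT_single, incT_single,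
        AddMonoidAlgebra.single_mul_single]
      rfl

-- ## Compatibility of inclusions and derivations

lemma incT_jY (y : W) : incT (jY y) = incY y := by
  induction y using AddMonoidAlgebra.induction_linear with
  | zero => simp
  | add f g hf hg => simp only [map_add, hf, hg]
  | single a b => rw [jY_single, incT_single, incY_single]

lemma incT_jYb (y : W) : incT (jYb y) = incYb y := by
  induction y using AddMonoidAlgebra.induction_linear with
  | zero => simp
  | add f g hf hg => simp only [map_add, hf, hg]
  | single a b => rw [jYb_single, incT_single, incYb_single]

lemma incT_ethR (t : LR) : incT (ethR t) = eth (incT t) := by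
  induction t using AddMonoidAlgebra.induction_linear with
  | zero => simp
  | add f g hf hg => simp only [map_add, hf, hg]
  | single a b => rw [ethR_single, incT_single, incT_single, eth_single]

lemma incT_ethBarR (t : LR) : incT (ethBarR t) = ethBar (incT t) := by
  induction t using AddMonoidAlgebra.induction_linear with
  | zero => simp
  | add f g hf hg => simp only [map_add, hf, hg]
  | single a b => rw [ethBarR_single, incT_single, incT_single, ethBar_single]

lemma incY_ethW (y : W) : incY (ethW y) = eth (incY y) := by
  induction y using AddMonoidAlgebra.induction_linear with
  | zero => simp
  | add f g hf hg => simp only [map_add, hf, hg]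
  | single a b => rw [ethW_single, incY_single, incY_single, eth_single]

lemma incYb_ethW (y : W) : incYb (ethW y) = ethBar (incYb y) := by
  induction y using AddMonoidAlgebra.induction_linear with
  | zero => simp
  | add f g hf hg => simp only [map_add, hf, hg]
  | single a b => rw [ethW_single, incYb_single, incYb_single, ethBar_single]

-- ## Vanishing lemmas

lemma ethBar_incY (y : W) : ethBar (incY y) = 0 := by
  induction y using AddMonoidAlgebra.induction_linear with
  | zero => simp
  | add f g hf hg => simp only [map_add, hf, hg, add_zero]
  | single a b => rw [incY_single, ethBar_single]; simp

lemma eth_incYb (y : W) : eth (incYb y) = 0 := by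
  induction y using AddMonoidAlgebra.induction_linear with
  | zero => simp
  | add f g hf hg => simp only [map_add, hf, hg, add_zero]
  | single a b => rw [incYb_single, eth_single]; simp

lemma du_incY (y : W) : du (incY y) = 0 := by
  induction y using AddMonoidAlgebra.induction_linear with
  | zero => simp
  | add f g hf hg => simp only [map_add, hf, hg, add_zero]
  | single a b => rw [incY_single, du_single]; simp

lemma du_incYb (y : W) : du (incYb y) = 0 := by
  induction y using AddMonoidAlgebra.induction_linear with
  | zero => simp
  | add f g hf hg => simp only [map_add, hf, hg, add_zero]
  | single a b => rw [incYb_single, du_single]; simp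

lemma du_incT (t : LR) : du (incT t) = 0 := by
  induction t using AddMonoidAlgebra.induction_linear with
  | zero => simp
  | add f g hf hg => simp only [map_add, hf, hg, add_zero]
  | single a b => rw [incT_single, du_single]; simp

-- ## uVar

lemma eth_uVar : eth uVar = 0 := by rw [uVar, eth_single]; simp

lemma ethBar_uVar : ethBar uVar = 0 := by rw [uVar, ethBar_single]; simp

lemma du_uVar : du uVar = 1 := by
  rw [uVar, du_single]
  simp only [Nat.cast_one, one_mul]
  rfl

-- ## Commutation of the derivations

lemma ethBar_eth (x : RU) : ethBar (eth x) = eth (ethBar x) := by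
  induction x using AddMonoidAlgebra.induction_linear with
  | zero => simp
  | add f g hf hg => simp only [map_add, hf, hg]
  | single a b => rw [eth_single, ethBar_single, ethBar_single, eth_single]; congr 1; ring

lemma du_eth (x : RU) : du (eth x) = eth (du x) := by
  induction x using AddMonoidAlgebra.induction_linear with
  | zero => simp
  | add f g hf hg => simp only [map_add, hf, hg]
  | single a b => rw [eth_single, du_single, du_single, eth_single]; congr 1; ring

lemma du_ethBar (x : RU) : du (ethBar x) = ethBar (du x) := by
  induction x using AddMonoidAlgebra.induction_linear with
  | zero => simp
  | add f g hf hg => simp only [map_add, hf, hg]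
  | single a b => rw [ethBar_single, du_single, du_single, ethBar_single]; congr 1; ring

lemma eth_incY (y : W) : eth (incY y) = incY (ethW y) := (incY_ethW y).symm

lemma ethBar_incYb (y : W) : ethBar (incYb y) = incYb (ethW y) := (incYb_ethW y).symm

lemma eth_incT (t : LR) : eth (incT t) = incT (ethR t) := (incT_ethR t).symm

lemma ethBar_incT (t : LR) : ethBar (incT t) = incT (ethBarR t) := (incT_ethBarR t).symm

lemma ethBarR_ethR (t : LR) : ethBarR (ethR t) = ethR (ethBarR t) := by
  induction t using AddMonoidAlgebra.induction_linear with
  | zero => simp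
  | add f g hf hg => simp only [map_add, hf, hg]
  | single a b => rw [ethR_single, ethBarR_single, ethBarR_single, ethR_single]; congr 1; ring

end Helpers

set_option maxRecDepth 200000 in
/-- The inhomogeneous term of the `σ⁰` transformation law satisfies
the cocycle condition: with `c_s := ð²f_s` and `D_s := D_s^{(3/2,−1/2)}`, one has
`D_{s₁}c_{s₂} − D_{s₂}c_{s₁} = c_{[s₁,s₂]}` for all symmetry parameters `s₁, s₂`. -/
theorem cocycle_condition (s₁ s₂ : SymParam) :
    Dop (3 / 2) (-(1 / 2)) s₁ (cOf s₂) - Dop (3 / 2) (-(1 / 2)) s₂ (cOf s₁)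
      = cOf (sBracket s₁ s₂) := by
  simp only [Dop, cOf, fOf, sBracket, psiR, LinearMap.add_apply, LinearMap.coe_comp,
    Function.comp_apply, LinearMap.mulLeft_apply, LinearMap.smul_apply, map_add, map_sub,
    map_smul, incT_mul, incT_jY, incT_jYb, incY_mul, incYb_mul,
    eth_incY, ethBar_incYb, eth_incT, ethBar_incT, eth_mul, ethBar_mul, du_mul, ethW_mul,
    ethBarR_ethR, du_eth, du_ethBar, eth_uVar, ethBar_uVar, du_uVar, ethBar_incY, eth_incYb, du_incY, du_incYb,
    du_incT, map_zero, zero_mul, mul_zero, add_zero, zero_add, smul_zero, one_mul, mul_one,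
    smul_mul_assoc, mul_smul_comm, smul_smul, smul_add, smul_sub, add_mul, mul_add, sub_mul,
    mul_sub]
  ring_nf
  simp only [show ((2:RU) = (2:ℂ) • (1:RU)) by rw [Algebra.smul_def, mul_one, map_ofNat], mul_smul_comm, smul_smul, mul_one]
  module
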